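/- Let A ∈ ℝ^{n×n}, B ∈ ℝ^{n×q}. Assume the largest eigenvalue of Sym(A) := (A+A^T)/2 is positive, and let K₁ ∈ ℝ^{q×n} be a dissipating feedback, i.e. (A−BK₁)+(A−BK₁)^T is negative definite. Then there exists ρ₀ ∈ (0,1) such that K₂ := (1−ρ₀)K₁ is a weakly dissipating feedback — i.e. (A−BK₂)+(A−BK₂)^T is negative semidefinite and its largest eigenvalue equals 0 — and ‖K₂‖_F = (1−ρ₀)‖K₁‖_F < ‖K₁‖_F. -/

import Mathlib

open Matrix

/-- The Frobenius norm of a real matrix. -/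
noncomputable def frobNorm {q n : ℕ} (K : Matrix (Fin q) (Fin n) ℝ) : ℝ :=
  Real.sqrt (∑ i, ∑ j, (K i j) ^ 2)




lemma quad_margin {n : ℕ} (hn : 0 < n) (M : Matrix (Fin n) (Fin n) ℝ)
    (h : ∀ x : Fin n → ℝ, x ≠ 0 → x ⬝ᵥ (M *ᵥ x) < 0) :
    ∃ c > 0, ∀ x : Fin n → ℝ, x ⬝ᵥ (M *ᵥ x) ≤ -c * ‖x‖ ^ 2 := by
  have : Nonempty (Fin n) := ⟨⟨0, hn⟩⟩
  have hf : Continuous fun x : Fin n → ℝ => x ⬝ᵥ (M *ᵥ x) := by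
    simp only [dotProduct, mulVec]
    exact continuous_finset_sum _ fun i _ => (continuous_apply i).mul
      (continuous_finset_sum _ fun j _ => (continuous_const.mul (continuous_apply j)))
  have hsph : IsCompact (Metric.sphere (0 : Fin n → ℝ) 1) := isCompact_sphere _ _
  have hne : (Metric.sphere (0 : Fin n → ℝ) 1).Nonempty := by
    refine ⟨fun _ => 1, ?_⟩
    simp [mem_sphere_zero_iff_norm]
  obtain ⟨u, hu, hmax⟩ := hsph.exists_isMaxOn hne hf.continuousOn
  have hu1 : ‖u‖ = 1 := mem_sphere_zero_iff_norm.mp hu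
  have hu0 : u ≠ 0 := by intro h0; rw [h0] at hu1; simp at hu1
  refine ⟨-(u ⬝ᵥ (M *ᵥ u)), by simpa using h u hu0, fun x => ?_⟩
  rcases eq_or_ne x 0 with rfl | hx
  · simp
  · have ht : (0:ℝ) < ‖x‖ := norm_pos_iff.mpr hx
    set y : Fin n → ℝ := ‖x‖⁻¹ • x with hy
    have hy1 : ‖y‖ = 1 := by
      rw [hy, norm_smul, norm_inv, norm_norm, inv_mul_cancel₀ ht.ne']
    have hxy : x = ‖x‖ • y := by
      rw [hy, smul_smul, mul_inv_cancel₀ ht.ne', one_smul]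
    have hquad : x ⬝ᵥ (M *ᵥ x) = ‖x‖ ^ 2 * (y ⬝ᵥ (M *ᵥ y)) := by
      conv_lhs => rw [hxy]
      rw [smul_dotProduct, mulVec_smul, dotProduct_smul, smul_eq_mul, smul_eq_mul]
      ring
    have hle : y ⬝ᵥ (M *ᵥ y) ≤ u ⬝ᵥ (M *ᵥ u) := hmax (mem_sphere_zero_iff_norm.mpr hy1)
    rw [hquad]
    have := mul_le_mul_of_nonneg_left hle (by positivity : (0:ℝ) ≤ ‖x‖ ^ 2)
    linarith

lemma quad_bound {n : ℕ} (N : Matrix (Fin n) (Fin n) ℝ) :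
    ∃ C > 0, ∀ x : Fin n → ℝ, x ⬝ᵥ (N *ᵥ x) ≤ C * ‖x‖ ^ 2 := by
  refine ⟨(∑ i, ∑ j, |N i j|) + 1, by positivity, fun x => ?_⟩
  have hx : ∀ i, |x i| ≤ ‖x‖ := fun i => by
    simpa [Real.norm_eq_abs] using norm_le_pi_norm x i
  have hxn : (0:ℝ) ≤ ‖x‖ := norm_nonneg x
  calc x ⬝ᵥ (N *ᵥ x) = ∑ i, ∑ j, x i * (N i j * x j) := by
        simp [dotProduct, mulVec, Finset.mul_sum]
    _ ≤ ∑ i, ∑ j, |N i j| * ‖x‖ ^ 2 := by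
        refine Finset.sum_le_sum fun i _ => Finset.sum_le_sum fun j _ => ?_
        calc x i * (N i j * x j) ≤ |x i * (N i j * x j)| := le_abs_self _
          _ = |N i j| * (|x i| * |x j|) := by rw [abs_mul, abs_mul]; ring
          _ ≤ |N i j| * (‖x‖ * ‖x‖) := by
              refine mul_le_mul_of_nonneg_left ?_ (abs_nonneg _)
              exact mul_le_mul (hx i) (hx j) (abs_nonneg _) hxn
          _ = |N i j| * ‖x‖ ^ 2 := by ring
    _ = (∑ i, ∑ j, |N i j|) * ‖x‖ ^ 2 := by rw [Finset.sum_mul]; simp [Finset.sum_mul]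
    _ ≤ ((∑ i, ∑ j, |N i j|) + 1) * ‖x‖ ^ 2 := by nlinarith [sq_nonneg ‖x‖]

/-- Proposition 4.1 of the paper: if `Sym(A)` has a positive
(largest) eigenvalue and `K₁` is a dissipating feedback, then some `K₂ = (1−ρ₀)K₁`
with `ρ₀ ∈ (0,1)` is weakly dissipating, with `‖K₂‖_F = (1−ρ₀)‖K₁‖_F < ‖K₁‖_F`. -/
theorem scaled_feedback_weakly_dissipates {n q : ℕ}
    (A : Matrix (Fin n) (Fin n) ℝ) (B : Matrix (Fin n) (Fin q) ℝ)
    (hSym : ((1 / 2 : ℝ) • (A + Aᵀ)).IsHermitian)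
    (hpos : ∃ i, 0 < hSym.eigenvalues i)
    (K₁ : Matrix (Fin q) (Fin n) ℝ)
    (hK₁ : ∀ x : Fin n → ℝ, x ≠ 0 →
      x ⬝ᵥ (((A - B * K₁) + (A - B * K₁)ᵀ) *ᵥ x) < 0) :
    ∃ ρ₀ ∈ Set.Ioo (0 : ℝ) 1,
      (-((A - B * ((1 - ρ₀) • K₁)) + (A - B * ((1 - ρ₀) • K₁))ᵀ)).PosSemidef ∧
      ¬ IsUnit ((A - B * ((1 - ρ₀) • K₁)) + (A - B * ((1 - ρ₀) • K₁))ᵀ).det ∧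
      frobNorm ((1 - ρ₀) • K₁) = (1 - ρ₀) * frobNorm K₁ ∧
      frobNorm ((1 - ρ₀) • K₁) < frobNorm K₁ := by
  obtain ⟨i, hi⟩ := hpos
  have hn : 0 < n := i.pos
  set M₀ : Matrix (Fin n) (Fin n) ℝ := (A - B * K₁) + (A - B * K₁)ᵀ with hM₀
  set N : Matrix (Fin n) (Fin n) ℝ := B * K₁ + (B * K₁)ᵀ with hN
  -- key algebraic identity
  have hkey : ∀ ρ : ℝ, (A - B * ((1 - ρ) • K₁)) + (A - B * ((1 - ρ) • K₁))ᵀ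
      = M₀ + ρ • N := by
    intro ρ
    rw [hM₀, hN, Matrix.mul_smul]
    ext a b
    simp [Matrix.transpose_apply, Matrix.smul_apply, Matrix.sub_apply, Matrix.add_apply]
    ring
  -- quadratic form identity
  have hq : ∀ (ρ : ℝ) (x : Fin n → ℝ),
      x ⬝ᵥ ((M₀ + ρ • N) *ᵥ x) = x ⬝ᵥ (M₀ *ᵥ x) + ρ * (x ⬝ᵥ (N *ᵥ x)) := by
    intro ρ x
    rw [add_mulVec, dotProduct_add, smul_mulVec, dotProduct_smul, smul_eq_mul]
  -- eigenvector with positive quadratic form for A + Aᵀ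
  set v : Fin n → ℝ := ⇑(hSym.eigenvectorBasis i) with hv
  have hv0 : v ≠ 0 := by
    intro h0
    exact hSym.eigenvectorBasis.orthonormal.ne_zero i
      ((WithLp.equiv 2 (Fin n → ℝ)).injective h0)
  have hvv : 0 < v ⬝ᵥ v := by
    rcases lt_or_eq_of_le (Finset.sum_nonneg fun j _ => mul_self_nonneg (v j)) with h | h
    · exact h
    · exact absurd (dotProduct_self_eq_zero.mp h.symm) hv0
  have hvA : v ⬝ᵥ ((A + Aᵀ) *ᵥ v) = 2 * hSym.eigenvalues i * (v ⬝ᵥ v) := by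
    have h1 := hSym.mulVec_eigenvectorBasis i
    have h2 : (A + Aᵀ) *ᵥ v = (2 * hSym.eigenvalues i) • v := by
      have : ((1 / 2 : ℝ) • (A + Aᵀ)) *ᵥ v = hSym.eigenvalues i • v := h1
      rw [smul_mulVec] at this
      have := congrArg (fun w => (2:ℝ) • w) this
      simpa [smul_smul] using this
    rw [h2, dotProduct_smul, smul_eq_mul]
  have hvpos : 0 < v ⬝ᵥ ((A + Aᵀ) *ᵥ v) := by
    rw [hvA]; positivity
  have hMN : M₀ + (1:ℝ) • N = A + Aᵀ := by
    rw [hM₀, hN, one_smul]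
    ext a b
    simp [Matrix.transpose_apply, Matrix.sub_apply, Matrix.add_apply]
    ring
  -- the set S
  set S : Set ℝ := {ρ | ρ ∈ Set.Icc (0:ℝ) 1 ∧
    ∀ x : Fin n → ℝ, x ⬝ᵥ (M₀ *ᵥ x) + ρ * (x ⬝ᵥ (N *ᵥ x)) ≤ 0} with hS
  have hM₀le : ∀ x : Fin n → ℝ, x ⬝ᵥ (M₀ *ᵥ x) ≤ 0 := by
    intro x
    rcases eq_or_ne x 0 with rfl | hx
    · simp
    · exact (hK₁ x hx).le
  have h0S : (0:ℝ) ∈ S := by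
    refine ⟨⟨le_refl 0, zero_le_one⟩, fun x => ?_⟩
    simpa using hM₀le x
  have hSne : S.Nonempty := ⟨0, h0S⟩
  have hSbdd : BddAbove S := ⟨1, fun ρ hρ => hρ.1.2⟩
  have hSclosed : IsClosed S := by
    have : S = Set.Icc (0:ℝ) 1 ∩ ⋂ x : Fin n → ℝ,
        {ρ : ℝ | x ⬝ᵥ (M₀ *ᵥ x) + ρ * (x ⬝ᵥ (N *ᵥ x)) ≤ 0} := by
      ext ρ; simp [hS, Set.mem_iInter]
    rw [this]
    exact isClosed_Icc.inter (isClosed_iInter fun x =>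
      isClosed_le (by fun_prop) continuous_const)
  set ρ₀ : ℝ := sSup S with hρ₀
  have hρ₀S : ρ₀ ∈ S := hSclosed.csSup_mem hSne hSbdd
  -- ρ₀ < 1
  have h1notS : (1:ℝ) ∉ S := by
    intro h1
    have := h1.2 v
    rw [← hq 1 v, hMN] at this
    linarith
  have hρ₀lt1 : ρ₀ < 1 := lt_of_le_of_ne hρ₀S.1.2 (fun h => h1notS (h ▸ hρ₀S))
  -- quad bound for N
  obtain ⟨C, hC, hCb⟩ := quad_bound N
  -- ρ₀ > 0
  obtain ⟨c, hc, hcb⟩ := quad_margin hn M₀ hK₁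
  have hρ'S : min (c / C) 1 ∈ S := by
    have hρ'pos : 0 < min (c / C) 1 := lt_min (div_pos hc hC) one_pos
    refine ⟨⟨hρ'pos.le, min_le_right _ _⟩, fun x => ?_⟩
    have h1 : x ⬝ᵥ (M₀ *ᵥ x) ≤ -c * ‖x‖ ^ 2 := hcb x
    have h2 : min (c / C) 1 * (x ⬝ᵥ (N *ᵥ x)) ≤ (c / C) * (C * ‖x‖ ^ 2) := by
      calc min (c / C) 1 * (x ⬝ᵥ (N *ᵥ x)) ≤ min (c / C) 1 * (C * ‖x‖ ^ 2) := by
            exact mul_le_mul_of_nonneg_left (hCb x) hρ'pos.le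
        _ ≤ (c / C) * (C * ‖x‖ ^ 2) := by
            refine mul_le_mul_of_nonneg_right (min_le_left _ _) (by positivity)
    have h3 : (c / C) * (C * ‖x‖ ^ 2) = c * ‖x‖ ^ 2 := by
      field_simp
    nlinarith
  have hρ₀pos : 0 < ρ₀ :=
    lt_of_lt_of_le (lt_min (div_pos hc hC) one_pos) (le_csSup hSbdd hρ'S)
  -- PosSemidef
  have hsemi : (-(M₀ + ρ₀ • N)).PosSemidef := by
    refine posSemidef_iff_dotProduct_mulVec.mpr ⟨?_, ?_⟩
    · have : (M₀ + ρ₀ • N).IsHermitian := by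
        rw [← hkey ρ₀, ← conjTranspose_eq_transpose_of_trivial]
        exact isHermitian_add_transpose_self _
      exact this.neg
    · intro x
      have hle := hρ₀S.2 x
      rw [← hq ρ₀ x] at hle
      have hst : star x = x := star_trivial x
      rw [hst, neg_mulVec, dotProduct_neg]
      linarith
  -- singularity
  have hsing : ¬ IsUnit (M₀ + ρ₀ • N).det := by
    intro hdet
    have hinj : ∀ x : Fin n → ℝ, x ≠ 0 → (M₀ + ρ₀ • N) *ᵥ x ≠ 0 := by
      intro x hx h0
      apply hx
      have := Matrix.nonsing_inv_mul _ hdet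
      calc x = ((M₀ + ρ₀ • N)⁻¹ * (M₀ + ρ₀ • N)) *ᵥ x := by rw [this, one_mulVec]
        _ = (M₀ + ρ₀ • N)⁻¹ *ᵥ ((M₀ + ρ₀ • N) *ᵥ x) := by rw [← mulVec_mulVec]
        _ = 0 := by rw [h0, mulVec_zero]
    have hstrict : ∀ x : Fin n → ℝ, x ≠ 0 → x ⬝ᵥ ((M₀ + ρ₀ • N) *ᵥ x) < 0 := by
      intro x hx
      have hge : 0 ≤ x ⬝ᵥ ((-(M₀ + ρ₀ • N)) *ᵥ x) := by
        simpa using hsemi.dotProduct_mulVec_nonneg x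
      have hne : x ⬝ᵥ ((-(M₀ + ρ₀ • N)) *ᵥ x) ≠ 0 := by
        intro h0
        have := (hsemi.dotProduct_mulVec_zero_iff x).mp (by simpa using h0)
        rw [neg_mulVec, neg_eq_zero] at this
        exact hinj x hx this
      have : 0 < x ⬝ᵥ ((-(M₀ + ρ₀ • N)) *ᵥ x) := lt_of_le_of_ne hge (Ne.symm hne)
      rw [neg_mulVec, dotProduct_neg] at this
      linarith
    obtain ⟨c', hc', hcb'⟩ := quad_margin hn _ hstrict
    set ρ'' := min (ρ₀ + c' / C) 1 with hρ''
    have hρ''S : ρ'' ∈ S := by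
      have hρ''nonneg : 0 ≤ ρ'' := le_min (by positivity) zero_le_one
      refine ⟨⟨hρ''nonneg, min_le_right _ _⟩, fun x => ?_⟩
      have hd1 : ρ₀ ≤ ρ'' := le_min (by linarith [div_pos hc' hC]) hρ₀lt1.le
      have hd2 : ρ'' - ρ₀ ≤ c' / C := by
        have := min_le_left (ρ₀ + c' / C) 1
        rw [hρ'']; linarith [this]
      have h1 : x ⬝ᵥ (M₀ *ᵥ x) + ρ₀ * (x ⬝ᵥ (N *ᵥ x)) ≤ -c' * ‖x‖ ^ 2 := by
        have := hcb' x
        rw [hq ρ₀ x] at this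
        exact this
      have h2 : (ρ'' - ρ₀) * (x ⬝ᵥ (N *ᵥ x)) ≤ (c' / C) * (C * ‖x‖ ^ 2) := by
        calc (ρ'' - ρ₀) * (x ⬝ᵥ (N *ᵥ x)) ≤ (ρ'' - ρ₀) * (C * ‖x‖ ^ 2) :=
              mul_le_mul_of_nonneg_left (hCb x) (by linarith)
          _ ≤ (c' / C) * (C * ‖x‖ ^ 2) :=
              mul_le_mul_of_nonneg_right hd2 (by positivity)
      have h3 : (c' / C) * (C * ‖x‖ ^ 2) = c' * ‖x‖ ^ 2 := by field_simp
      nlinarith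
    have hgt : ρ₀ < ρ'' := lt_min (by linarith [div_pos hc' hC]) hρ₀lt1
    exact absurd (le_csSup hSbdd hρ''S) (not_le.mpr hgt)
  -- Frobenius norms
  have hs1 : (0:ℝ) < 1 - ρ₀ := by linarith
  have hfrob_eq : frobNorm ((1 - ρ₀) • K₁) = (1 - ρ₀) * frobNorm K₁ := by
    unfold frobNorm
    have : ∑ a, ∑ b, (((1 - ρ₀) • K₁) a b) ^ 2
        = (1 - ρ₀) ^ 2 * ∑ a, ∑ b, (K₁ a b) ^ 2 := by
      simp [Matrix.smul_apply, smul_eq_mul, mul_pow, Finset.mul_sum]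
    rw [this, Real.sqrt_mul (sq_nonneg _), Real.sqrt_sq hs1.le]
  have hK₁ne : K₁ ≠ 0 := by
    intro h0
    have hN0 : N = 0 := by rw [hN, h0]; simp
    have hM : M₀ = A + Aᵀ := by
      have h' := hMN
      rw [hN0] at h'
      simpa using h'
    have := hK₁ v hv0
    rw [hM] at this
    linarith
  have hfrob_pos : 0 < frobNorm K₁ := by
    unfold frobNorm
    rw [Real.sqrt_pos]
    rcases lt_or_eq_of_le (Finset.sum_nonneg fun a _ =>
      Finset.sum_nonneg fun b _ => sq_nonneg (K₁ a b)) with h | h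
    · exact h
    · exfalso
      apply hK₁ne
      ext a b
      have hz := (Finset.sum_eq_zero_iff_of_nonneg (fun a _ =>
        Finset.sum_nonneg fun b _ => sq_nonneg (K₁ a b))).mp h.symm a (Finset.mem_univ a)
      have := (Finset.sum_eq_zero_iff_of_nonneg (fun b _ => sq_nonneg (K₁ a b))).mp
        hz b (Finset.mem_univ b)
      exact pow_eq_zero_iff (by norm_num) |>.mp this
  refine ⟨ρ₀, ⟨hρ₀pos, hρ₀lt1⟩, ?_, ?_, hfrob_eq, ?_⟩
  · rw [hkey ρ₀]; exact hsemi
  · rw [hkey ρ₀]; exact hsing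
  · rw [hfrob_eq]; nlinarith
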